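/- Let λ/μ be a skew Young diagram and let D be any intermediate diagram occurring in some execution of Algorithm 1 starting from λ/μ. Then, after deleting the empty rows of D, the resulting diagram is almost skew: it is row convex, its rightmost column indices r_i are weakly decreasing, and its sequence of leftmost column indices (l_1, …, l_k) is, for some indices 1 ≤ a ≤ i ≤ k, either of the form l_i ≤ l_{i+1} ≤ … ≤ l_k ≤ l_{i−1} ≤ l_{i−2} ≤ … ≤ l_1 or of the form l_a ≤ l_{a+1} ≤ … ≤ l_{i−2} ≤ l_i ≤ l_{i+1} ≤ … ≤ l_k ≤ l_{i−1} ≤ l_{a−1} ≤ l_{a−2} ≤ … ≤ l_1. -/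

import Mathlib

open scoped ENat

/-- A diagram: a finite set of boxes `(i, j)` (row `i` from the top, column `j` from the left). -/
abbrev Dg := Finset (ℕ × ℕ)

/-- The set of column indices of boxes in row `i` of `D`. -/
def row (D : Dg) (i : ℕ) : Finset ℕ := (D.filter (fun b => b.1 = i)).image Prod.snd

/-- `l_i`: the least column index in row `i`, with the convention `l_i = ∞` for an empty row. -/
noncomputable def lRow (D : Dg) (i : ℕ) : ℕ∞ := (row D i).inf (fun j => (j : ℕ∞))

/-- `r_i`: the greatest column index in row `i`, with the convention `r_i = 0` for an empty row. -/
def rRow (D : Dg) (i : ℕ) : ℕ := (row D i).sup id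

/-- Index `i ≥ 2` with `l_{i-1} > l_i`. -/
def Violation (D : Dg) (i : ℕ) : Prop := 2 ≤ i ∧ lRow D i < lRow D (i - 1)

/-- `i` is the maximum index with `l_{i-1} > l_i`. -/
def MaxViolation (D : Dg) (i : ℕ) : Prop := Violation D i ∧ ∀ i', Violation D i' → i' ≤ i

/-- No index `i ≥ 2` has `l_{i-1} > l_i`. -/
def TerminalD (D : Dg) : Prop := ∀ i, ¬ Violation D i

/-- Step A is permitted at row `i`: `l_{i-1} > l_i` and (`r_i ≥ l_{i-1} - 1` or row `i-1` empty). -/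
def StepAOk (D : Dg) (i : ℕ) : Prop :=
  Violation D i ∧ (lRow D (i - 1) - 1 ≤ (rRow D i : ℕ∞) ∨ row D (i - 1) = ∅)

/-- `l_i ≤ q < l_{i-1}`: the columns affected by Step A at row `i`. -/
def InL (D : Dg) (i q : ℕ) : Prop := lRow D i ≤ (q : ℕ∞) ∧ (q : ℕ∞) < lRow D (i - 1)

/-- `D'` is the result of performing Step A on `D` at row `i`: for each column
`l_i ≤ q < l_{i-1}`, membership of `(i, q)` and `(i-1, q)` is exchanged. -/
def IsStepA (D D' : Dg) (i : ℕ) : Prop :=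
  ∀ p q : ℕ,
    (p = i → InL D i q → ((p, q) ∈ D' ↔ (i - 1, q) ∈ D)) ∧
    (p = i - 1 → InL D i q → ((p, q) ∈ D' ↔ (i, q) ∈ D)) ∧
    (¬((p = i ∨ p = i - 1) ∧ InL D i q) → ((p, q) ∈ D' ↔ (p, q) ∈ D))

/-- Step B is permitted at row `i`: `l_{i-1} > l_i` and `r_i ≤ r_{i-1} - 1`. -/
def StepBOk (D : Dg) (i : ℕ) : Prop :=
  Violation D i ∧ rRow D i ≤ rRow D (i - 1) - 1

/-- The rows affected by Step B at row `i`: rows `p ≥ i` with `l_p = l_i`. -/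
def BRow (D : Dg) (i p : ℕ) : Prop := i ≤ p ∧ lRow D p = lRow D i

/-- `D'` is the result of performing Step B on `D` at row `i`: in each row `p ≥ i` with
`l_p = l_i`, the box `(p, l_p)` is removed and the box `(p, r_p + 1)` is added. -/
def IsStepB (D D' : Dg) (i : ℕ) : Prop :=
  ∀ p q : ℕ,
    (BRow D i p →
      ((p, q) ∈ D' ↔ (((p, q) ∈ D ∧ (q : ℕ∞) ≠ lRow D p) ∨ q = rRow D p + 1))) ∧
    (¬ BRow D i p → ((p, q) ∈ D' ↔ (p, q) ∈ D))

/-- One step of Algorithm 1: at the maximum index `i` with `l_{i-1} > l_i`, perform a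
permitted Step A or Step B. -/
def AlgStep (D D' : Dg) : Prop :=
  ∃ i, MaxViolation D i ∧ ((StepAOk D i ∧ IsStepA D D' i) ∨ (StepBOk D i ∧ IsStepB D D' i))

/-- An execution of Algorithm 1 starting from `D0`: a finite sequence of diagrams beginning
at `D0`, each obtained from the previous by a step of Algorithm 1, ending at a terminal
diagram. -/
def IsExec (D0 : Dg) (L : List Dg) : Prop :=
  L.head? = some D0 ∧ L.Chain' AlgStep ∧ ∀ Dl, L.getLast? = some Dl → TerminalD Dl

/-- The indices of nonempty rows of `D`, from top to bottom. -/
def rowIdx (D : Dg) : List ℕ := (D.image Prod.fst).sort (· ≤ ·)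

/-- The lengths of the nonempty rows of `D`, read from top to bottom. -/
def rowLengths (D : Dg) : List ℕ := (rowIdx D).map (fun p => (row D p).card)

/-- The execution `L` terminates at a diagram whose nonempty rows, read from top to bottom,
have lengths `ν 1, ν 2, …`. -/
def EndsAt (L : List Dg) (ν : ℕ → ℕ) : Prop :=
  ∃ Dl, L.getLast? = some Dl ∧ ∀ m : ℕ, (rowLengths Dl).getD m 0 = ν (m + 1)

/-- A partition, written as a weakly decreasing function on indices `1, 2, …`. -/
def IsPartition (f : ℕ → ℕ) : Prop := f 0 = 0 ∧ ∀ p, 1 ≤ p → f (p + 1) ≤ f p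

/-- The partition `f` is contained in the `k × w` rectangle. -/
def InRect (f : ℕ → ℕ) (k w : ℕ) : Prop := (∀ p, k < p → f p = 0) ∧ ∀ p, f p ≤ w

/-- The skew Young diagram `lam / mu` (boxes of `lam` not in `mu`), rows `1, …, k`. -/
def skewD (lam mu : ℕ → ℕ) (k : ℕ) : Dg :=
  (Finset.Icc 1 k).biUnion (fun p => (Finset.Icc (mu p + 1) (lam p)).image (fun q => (p, q)))

/-- `lam^∨`, the complementary partition of `lam` inside the `k × w` rectangle. -/
def dualP (lam : ℕ → ℕ) (k w : ℕ) : ℕ → ℕ :=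
  fun p => if 1 ≤ p ∧ p ≤ k then w - lam (k + 1 - p) else 0

/-- `D` is row convex. -/
def RowConvex (D : Dg) : Prop :=
  ∀ i j j' j'', (i, j) ∈ D → (i, j') ∈ D → j ≤ j'' → j'' ≤ j' → (i, j'') ∈ D

/-- `l` is weakly increasing on positions `s, s+1, …, t`. -/
def MonoL (l : ℕ → ℕ∞) (s t : ℕ) : Prop := ∀ p q, s ≤ p → p ≤ q → q ≤ t → l p ≤ l q

/-- `l` is weakly decreasing on positions `s, s+1, …, t`. -/
def AntiL (l : ℕ → ℕ∞) (s t : ℕ) : Prop := ∀ p q, s ≤ p → p ≤ q → q ≤ t → l q ≤ l p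

/-- The sequence `(l_1, …, l_k)` of leftmost column indices of `D` has, for some indices
`1 ≤ a ≤ i ≤ k`, either the form `l_i ≤ l_{i+1} ≤ … ≤ l_k ≤ l_{i-1} ≤ l_{i-2} ≤ … ≤ l_1`,
or the form
`l_a ≤ … ≤ l_{i-2} ≤ l_i ≤ … ≤ l_k ≤ l_{i-1} ≤ l_{a-1} ≤ … ≤ l_1`. -/
def LShape (D : Dg) (k : ℕ) : Prop :=
  ∃ a i, 1 ≤ a ∧ a ≤ i ∧ i ≤ k ∧
    ((MonoL (lRow D) i k ∧ (2 ≤ i → lRow D k ≤ lRow D (i - 1)) ∧ AntiL (lRow D) 1 (i - 1)) ∨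
     (2 ≤ i ∧ MonoL (lRow D) a (i - 2) ∧ (a ≤ i - 2 → lRow D (i - 2) ≤ lRow D i) ∧
      MonoL (lRow D) i k ∧ lRow D k ≤ lRow D (i - 1) ∧
      (2 ≤ a → lRow D (i - 1) ≤ lRow D (a - 1)) ∧ AntiL (lRow D) 1 (a - 1)))

/-- `D` is almost skew with nonempty rows exactly `1, …, k`: it is row convex, its `r_i`
are weakly decreasing, and its `l_i` satisfy one of the two inequality chains above. -/
def AlmostSkew (D : Dg) (k : ℕ) : Prop :=
  (∀ p, (row D p).Nonempty ↔ 1 ≤ p ∧ p ≤ k) ∧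
  RowConvex D ∧
  (∀ p q, 1 ≤ p → p ≤ q → q ≤ k → rRow D q ≤ rRow D p) ∧
  LShape D k

/-- Deleting the empty rows of `D`: each box is moved to the row given by the rank of its
row among the nonempty rows of `D`. -/
def compress (D : Dg) : Dg :=
  D.image (fun b => (((D.image Prod.fst).filter (fun p => p ≤ b.1)).card, b.2))

namespace St6

abbrev SS (D : Dg) : Finset ℕ := D.image Prod.fst

lemma mem_row {D : Dg} {p q : ℕ} : q ∈ row D p ↔ (p, q) ∈ D := by
  simp only [row, Finset.mem_image, Finset.mem_filter]
  constructor
  · rintro ⟨⟨a, b⟩, ⟨hD, h1⟩, h2⟩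
    simp only at h1 h2; subst h1; subst h2; exact hD
  · intro h; exact ⟨(p, q), ⟨h, rfl⟩, rfl⟩

lemma mem_SS {D : Dg} {p : ℕ} : p ∈ SS D ↔ (row D p).Nonempty := by
  simp only [SS, Finset.mem_image, Finset.Nonempty]
  constructor
  · rintro ⟨⟨a, b⟩, hD, h⟩; simp only at h; subst h; exact ⟨b, mem_row.2 hD⟩
  · rintro ⟨q, hq⟩; exact ⟨(p, q), mem_row.1 hq, rfl⟩

lemma lRow_eq_top {D : Dg} {p : ℕ} : lRow D p = ⊤ ↔ row D p = ∅ := by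
  rw [lRow, Finset.inf_eq_top_iff]
  constructor
  · intro h
    by_contra hne
    obtain ⟨q, hq⟩ := Finset.nonempty_of_ne_empty hne
    exact (WithTop.coe_ne_top (h q hq)).elim
  · intro h; rw [h]; intro q hq; simp at hq

lemma lRow_le {D : Dg} {p q : ℕ} (h : (p, q) ∈ D) : lRow D p ≤ (q : ℕ∞) :=
  Finset.inf_le (mem_row.2 h)

lemma exists_lRow {D : Dg} {p : ℕ} (h : (row D p).Nonempty) :
    ∃ j, (p, j) ∈ D ∧ (j : ℕ∞) = lRow D p := by
  obtain ⟨j, hj, hje⟩ := Finset.exists_mem_eq_inf (row D p) h (fun j => (j : ℕ∞))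
  exact ⟨j, mem_row.1 hj, hje.symm⟩

lemma le_rRow {D : Dg} {p q : ℕ} (h : (p, q) ∈ D) : q ≤ rRow D p :=
  Finset.le_sup (f := id) (mem_row.2 h)

lemma rRow_mem {D : Dg} {p : ℕ} (h : (row D p).Nonempty) : (p, rRow D p) ∈ D := by
  obtain ⟨j, hj, hje⟩ := Finset.exists_mem_eq_sup (row D p) h id
  rw [rRow, hje]; exact mem_row.1 hj

lemma lRow_le_rRow {D : Dg} {p : ℕ} (h : (row D p).Nonempty) :
    lRow D p ≤ (rRow D p : ℕ∞) := lRow_le (rRow_mem h)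

lemma lRow_ne_top {D : Dg} {p : ℕ} (h : (row D p).Nonempty) : lRow D p ≠ ⊤ := by
  intro ht
  rw [lRow_eq_top] at ht
  exact Finset.not_nonempty_empty (ht ▸ h)

/-- rank -/
def rank (D : Dg) (x : ℕ) : ℕ := ((SS D).filter (fun p => p ≤ x)).card

lemma rank_mono {D : Dg} {x y : ℕ} (h : x ≤ y) : rank D x ≤ rank D y :=
  Finset.card_le_card (Finset.monotone_filter_right _ (fun p _ hp => le_trans hp h))

lemma rank_lt {D : Dg} {x y : ℕ} (hy : y ∈ SS D) (h : x < y) : rank D x < rank D y := by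
  apply Finset.card_lt_card
  constructor
  · exact Finset.monotone_filter_right _ (fun p _ hp => le_trans hp h.le)
  · intro hsub
    have := hsub (Finset.mem_filter.2 ⟨hy, le_refl y⟩)
    exact absurd (Finset.mem_filter.1 this).2 (not_le.2 h)

lemma rank_pos {D : Dg} {p : ℕ} (hp : p ∈ SS D) : 1 ≤ rank D p :=
  Finset.card_pos.2 ⟨p, Finset.mem_filter.2 ⟨hp, le_refl p⟩⟩

lemma rank_le_card {D : Dg} {x : ℕ} : rank D x ≤ (SS D).card :=
  Finset.card_le_card (Finset.filter_subset _ _)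

lemma rank_le_iff {D : Dg} {p p' : ℕ} (hp : p ∈ SS D) (hp' : p' ∈ SS D) :
    rank D p ≤ rank D p' ↔ p ≤ p' := by
  constructor
  · intro h; by_contra hc; exact absurd (rank_lt hp (not_le.1 hc)) (not_lt.2 h)
  · intro h
    rcases h.lt_or_eq with h | h
    · exact (rank_lt hp' h).le
    · subst h; exact le_refl _

lemma rank_injOn {D : Dg} {p p' : ℕ} (hp : p ∈ SS D) (hp' : p' ∈ SS D)
    (h : rank D p = rank D p') : p = p' :=
  le_antisymm ((rank_le_iff hp hp').1 h.le) ((rank_le_iff hp' hp).1 h.ge)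

lemma rank_surj {D : Dg} {c : ℕ} (h1 : 1 ≤ c) (h2 : c ≤ (SS D).card) :
    ∃ p ∈ SS D, rank D p = c := by
  have hinj : Set.InjOn (rank D) (SS D) := fun a ha b hb => rank_injOn ha hb
  have hsub : (SS D).image (rank D) ⊆ Finset.Icc 1 (SS D).card := by
    intro c hc
    obtain ⟨p, hp, hpc⟩ := Finset.mem_image.1 hc
    exact Finset.mem_Icc.2 ⟨hpc ▸ rank_pos hp, hpc ▸ rank_le_card⟩
  have hcard : ((SS D).image (rank D)).card = (SS D).card :=
    Finset.card_image_of_injOn hinj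
  have heq : (SS D).image (rank D) = Finset.Icc 1 (SS D).card := by
    apply Finset.eq_of_subset_of_card_le hsub
    rw [hcard, Nat.card_Icc]; omega
  have : c ∈ (SS D).image (rank D) := heq ▸ Finset.mem_Icc.2 ⟨h1, h2⟩
  obtain ⟨p, hp, hpc⟩ := Finset.mem_image.1 this
  exact ⟨p, hp, hpc⟩

lemma compress_mem {D : Dg} {c q : ℕ} :
    (c, q) ∈ compress D ↔ ∃ p, (p, q) ∈ D ∧ rank D p = c := by
  simp only [compress, Finset.mem_image]
  constructor
  · rintro ⟨⟨a, b⟩, hD, h⟩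
    simp only [Prod.mk.injEq] at h
    exact ⟨a, by rw [h.2] at hD; exact hD, h.1⟩
  · rintro ⟨p, hD, hr⟩
    exact ⟨(p, q), hD, by simp [rank, SS] at hr ⊢; exact hr⟩

lemma row_compress {D : Dg} {p : ℕ} (hp : p ∈ SS D) :
    row (compress D) (rank D p) = row D p := by
  ext q
  rw [mem_row, mem_row, compress_mem]
  constructor
  · rintro ⟨p', hp', hr⟩
    have : p' ∈ SS D := mem_SS.2 ⟨q, mem_row.2 hp'⟩
    exact (rank_injOn this hp hr) ▸ hp'
  · intro h; exact ⟨p, h, rfl⟩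

lemma row_compress_nonempty {D : Dg} {c : ℕ} :
    (row (compress D) c).Nonempty ↔ 1 ≤ c ∧ c ≤ (SS D).card := by
  constructor
  · rintro ⟨q, hq⟩
    obtain ⟨p, hpD, hr⟩ := compress_mem.1 (mem_row.1 hq)
    have hp : p ∈ SS D := mem_SS.2 ⟨q, mem_row.2 hpD⟩
    exact ⟨hr ▸ rank_pos hp, hr ▸ rank_le_card⟩
  · rintro ⟨h1, h2⟩
    obtain ⟨p, hp, hpc⟩ := rank_surj h1 h2
    rw [← hpc, row_compress hp]
    exact mem_SS.1 hp

lemma rank_sub_one {D : Dg} {i : ℕ} (hi : 1 ≤ i) (hmem : i ∈ SS D) :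
    rank D i = rank D (i - 1) + 1 := by
  have : (SS D).filter (fun p => p ≤ i) =
      insert i ((SS D).filter (fun p => p ≤ i - 1)) := by
    ext p
    simp only [Finset.mem_filter, Finset.mem_insert]
    constructor
    · rintro ⟨hp, hpi⟩
      rcases eq_or_lt_of_le hpi with h | h
      · exact Or.inl h
      · exact Or.inr ⟨hp, by omega⟩
    · rintro (h | ⟨hp, hpi⟩)
      · exact ⟨h ▸ hmem, h.le⟩
      · exact ⟨hp, by omega⟩
  rw [rank, this, Finset.card_insert_of_notMem, rank]
  simp only [Finset.mem_filter]
  rintro ⟨-, h⟩; omega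

lemma rank_not_mem {D : Dg} {i : ℕ} (hi : 1 ≤ i) (hmem : i ∉ SS D) :
    rank D i = rank D (i - 1) := by
  have : (SS D).filter (fun p => p ≤ i) = (SS D).filter (fun p => p ≤ i - 1) := by
    ext p
    simp only [Finset.mem_filter, and_congr_right_iff]
    intro hp
    constructor
    · intro h
      rcases eq_or_lt_of_le h with h | h
      · exact absurd (h ▸ hp) hmem
      · omega
    · intro h; omega
  rw [rank, this, rank]

/-- helpers for rows given by intervals -/
lemma row_interval {E : Dg} {p lo hi : ℕ}
    (h : ∀ q, (p, q) ∈ E ↔ lo ≤ q ∧ q ≤ hi) (hlohi : lo ≤ hi) :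
    lRow E p = lo ∧ rRow E p = hi ∧ (row E p).Nonempty := by
  have hlo : (p, lo) ∈ E := (h lo).2 ⟨le_refl _, hlohi⟩
  have hhi : (p, hi) ∈ E := (h hi).2 ⟨hlohi, le_refl _⟩
  refine ⟨le_antisymm (lRow_le hlo) ?_, le_antisymm ?_ (le_rRow hhi), ⟨lo, mem_row.2 hlo⟩⟩
  · apply Finset.le_inf
    intro q hq
    exact_mod_cast Nat.cast_le.2 ((h q).1 (mem_row.1 hq)).1
  · apply Finset.sup_le
    intro q hq
    exact ((h q).1 (mem_row.1 hq)).2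

lemma row_congr {E E' : Dg} {p : ℕ} (h : ∀ q, (p, q) ∈ E' ↔ (p, q) ∈ E) :
    row E' p = row E p := by
  ext q; rw [mem_row, mem_row]; exact h q

end St6
namespace St6

/-- abstract L-shape -/
def LShapeF (m : ℕ → ℕ∞) (k : ℕ) : Prop :=
  ∃ a i, 1 ≤ a ∧ a ≤ i ∧ i ≤ k ∧
    ((MonoL m i k ∧ (2 ≤ i → m k ≤ m (i - 1)) ∧ AntiL m 1 (i - 1)) ∨
     (2 ≤ i ∧ MonoL m a (i - 2) ∧ (a ≤ i - 2 → m (i - 2) ≤ m i) ∧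
      MonoL m i k ∧ m k ≤ m (i - 1) ∧
      (2 ≤ a → m (i - 1) ≤ m (a - 1)) ∧ AntiL m 1 (a - 1)))

lemma lshape_iff {D : Dg} {k : ℕ} : LShape D k ↔ LShapeF (lRow D) k := Iff.rfl

def N1 (m : ℕ → ℕ∞) (k c : ℕ) : Prop :=
  AntiL m 1 (c - 1) ∧ MonoL m c k ∧ m k ≤ m (c - 1)

def N2 (m : ℕ → ℕ∞) (k c : ℕ) : Prop :=
  ∃ a, 1 ≤ a ∧ a ≤ c - 2 ∧ AntiL m 1 (a - 1) ∧ MonoL m a (c - 2) ∧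
    m (c - 2) ≤ m c ∧ MonoL m c k ∧ m k ≤ m (c - 1) ∧ (2 ≤ a → m (c - 1) ≤ m (a - 1))

/-- B1-style data at `t` implies the normalized form. -/
lemma norm_of_B1 {m : ℕ → ℕ∞} {k c t : ℕ} (h2c : 2 ≤ c) (hck : c ≤ k) (htk : t ≤ k)
    (hmono : MonoL m t k) (hbd : 2 ≤ t → m k ≤ m (t - 1)) (hanti : AntiL m 1 (t - 1))
    (hcmono : MonoL m c k) (hviol : m c < m (c - 1)) : N1 m k c := by
  have hct : c ≤ t := by
    by_contra hc
    push_neg at hc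
    exact absurd (hmono (c - 1) c (by omega) (by omega) hck) (not_le.2 hviol)
  rcases eq_or_lt_of_le hct with h | h
  · subst h
    exact ⟨hanti, hcmono, hbd h2c⟩
  · refine ⟨fun p q hp hpq hq => hanti p q hp hpq (by omega), hcmono, ?_⟩
    calc m k ≤ m (t - 1) := hbd (by omega)
    _ ≤ m (c - 1) := hanti (c - 1) (t - 1) (by omega) (by omega) (le_refl _)

lemma normalize {m : ℕ → ℕ∞} {k c : ℕ} (hL : LShapeF m k) (h2c : 2 ≤ c) (hck : c ≤ k)
    (hcmono : MonoL m c k) (hviol : m c < m (c - 1)) : N1 m k c ∨ N2 m k c := by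
  obtain ⟨a, t, ha1, hat, htk, hB1 | hB2⟩ := hL
  · exact Or.inl (norm_of_B1 h2c hck htk hB1.1 hB1.2.1 hB1.2.2 hcmono hviol)
  obtain ⟨h2t, hm1, hbd1, hm2, hbd2, hbd3, hanti⟩ := hB2
  by_cases hale : a ≤ t - 2
  case neg =>
    -- a = t - 1 or a = t ; derive B1 data at t
    have hanti' : AntiL m 1 (t - 1) := by
      intro p q hp hpq hq
      rcases Nat.lt_or_ge q a with h | h
      · exact hanti p q hp hpq (by omega)
      · -- q = a = t - 1 (or q = t - 1 = a): q ≥ a, q ≤ t-1, a > t-2 so a ≥ t-1 so q = a = t-1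
        have hqa : q = a := by omega
        rcases Nat.lt_or_ge p q with hpq' | hpq'
        · calc m q = m (t - 1) := by rw [show q = t - 1 by omega]
          _ ≤ m (a - 1) := hbd3 (by omega)
          _ ≤ m p := hanti p (a - 1) hp (by omega) (le_refl _)
        · have : p = q := by omega
          rw [this]
    exact Or.inl (norm_of_B1 h2c hck htk hm2
      (fun _ => hbd2)
      hanti' hcmono hviol)
  case pos =>
    have hct : c ≤ t := by
      by_contra hc
      push_neg at hc
      exact absurd (hm2 (c - 1) c (by omega) (by omega) hck) (not_le.2 hviol)
    rcases eq_or_lt_of_le hct with h | h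
    · subst h
      exact Or.inr ⟨a, ha1, hale, hanti, hm1, hbd1 hale, hm2, hbd2, hbd3⟩
    · -- c < t ; show c ≤ a
      have hca : c ≤ a := by
        by_contra hc
        push_neg at hc
        -- a < c < t
        rcases Nat.lt_or_ge c (t - 1) with h' | h'
        · exact absurd (hm1 (c - 1) c (by omega) (by omega) (by omega)) (not_le.2 hviol)
        · -- c = t - 1
          have hceq : c = t - 1 := by omega
          have : m (c - 1) ≤ m c := by
            rw [hceq, show t - 1 - 1 = t - 2 by omega]
            calc m (t - 2) ≤ m t := hbd1 hale
            _ ≤ m k := hm2 t k (le_refl _) htk (le_refl _)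
            _ ≤ m (t - 1) := hbd2
          exact absurd this (not_le.2 hviol)
      rcases eq_or_lt_of_le hca with h' | h'
      · -- c = a : N1
        subst h'
        refine Or.inl ⟨hanti, hcmono, ?_⟩
        calc m k ≤ m (t - 1) := hbd2
        _ ≤ m (c - 1) := hbd3 h2c
      · -- c < a : N1
        refine Or.inl ⟨fun p q hp hpq hq => hanti p q hp hpq (by omega), hcmono, ?_⟩
        calc m k ≤ m (t - 1) := hbd2
        _ ≤ m (a - 1) := hbd3 (by omega)
        _ ≤ m (c - 1) := hanti (c - 1) (a - 1) (by omega) (by omega) (le_refl _)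

lemma stepA_survive_shape {m m' : ℕ → ℕ∞} {k c : ℕ}
    (h2c : 2 ≤ c) (hck : c ≤ k)
    (hN : N1 m k c ∨ N2 m k c) (hviol : m c < m (c - 1)) (hcmono : MonoL m c k)
    (h1 : m' (c - 1) = m c) (h2 : m' c = m (c - 1))
    (h3 : ∀ e, e ≠ c - 1 → e ≠ c → m' e = m e) : LShapeF m' k := by
  rcases hN with ⟨hanti, hmono, hbd⟩ | ⟨a, ha1, hale, hanti, hm1, hbd1, hmono, hbd, hbd3⟩
  · rcases eq_or_lt_of_le hck with hek | hlt
    · -- c = k : B1 witness (c-1, c-1)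
      subst hek
      refine ⟨c - 1, c - 1, by omega, le_refl _, by omega, Or.inl ⟨?_, ?_, ?_⟩⟩
      · intro p q hp hpq hq
        have hp' : p = c - 1 ∨ p = c := by omega
        have hq' : q = c - 1 ∨ q = c := by omega
        rcases hp' with hp' | hp' <;> rcases hq' with hq' | hq' <;> subst hp' <;> subst hq'
        · exact le_refl _
        · rw [h1, h2]; exact hviol.le
        · omega
        · exact le_refl _
      · intro h2c1
        rw [h2, h3 (c - 1 - 1) (by omega) (by omega)]
        exact hanti (c - 1 - 1) (c - 1) (by omega) (by omega) (le_refl _)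
      · intro p q hp hpq hq
        rw [h3 p (by omega) (by omega), h3 q (by omega) (by omega)]
        exact hanti p q hp hpq (by omega)
    · -- c < k : B2 witness (c-1, c+1)
      refine ⟨c - 1, c + 1, by omega, by omega, by omega, Or.inr
        ⟨by omega, ?_, ?_, ?_, ?_, ?_, ?_⟩⟩
      · intro p q hp hpq hq
        have : p = c - 1 ∧ q = c - 1 := by omega
        rw [this.1, this.2]
      · intro _
        rw [show c + 1 - 2 = c - 1 by omega, h1, h3 (c + 1) (by omega) (by omega)]
        exact hcmono c (c + 1) (le_refl _) (by omega) hlt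
      · intro p q hp hpq hq
        rw [h3 p (by omega) (by omega), h3 q (by omega) (by omega)]
        exact hmono p q (by omega) hpq hq
      · rw [show c + 1 - 1 = c by omega, h2, h3 k (by omega) (by omega)]
        exact hbd
      · intro h2c1
        rw [show c + 1 - 1 = c by omega, h2, h3 (c - 1 - 1) (by omega) (by omega)]
        exact hanti (c - 1 - 1) (c - 1) (by omega) (by omega) (le_refl _)
      · intro p q hp hpq hq
        rw [h3 p (by omega) (by omega), h3 q (by omega) (by omega)]
        exact hanti p q hp hpq (by omega)
  · -- N2 case
    have key : ∀ p, a ≤ p → p ≤ c - 2 → m p ≤ m c := fun p hp hpc =>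
      le_trans (hm1 p (c - 2) hp hpc (le_refl _)) hbd1
    rcases eq_or_lt_of_le hck with hek | hlt
    · -- c = k : B1 witness (a, a)
      subst hek
      refine ⟨a, a, ha1, le_refl _, by omega, Or.inl ⟨?_, ?_, ?_⟩⟩
      · intro p q hp hpq hq
        rcases Nat.lt_or_ge q (c - 1) with hq' | hq'
        · rw [h3 p (by omega) (by omega), h3 q (by omega) (by omega)]
          exact hm1 p q hp hpq (by omega)
        · rcases Nat.lt_or_ge q c with hq'' | hq''
          · rw [show q = c - 1 by omega, h1]
            rcases Nat.lt_or_ge p (c - 1) with hp' | hp'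
            · rw [h3 p (by omega) (by omega)]; exact key p hp (by omega)
            · rw [show p = c - 1 by omega, h1]
          · rw [show q = c by omega, h2]
            rcases Nat.lt_or_ge p (c - 1) with hp' | hp'
            · rw [h3 p (by omega) (by omega)]
              exact le_trans (key p hp (by omega)) hviol.le
            · rcases Nat.lt_or_ge p c with hp'' | hp''
              · rw [show p = c - 1 by omega, h1]; exact hviol.le
              · rw [show p = c by omega, h2]
      · intro h2a
        rw [h2, h3 (a - 1) (by omega) (by omega)]
        exact hbd3 h2a
      · intro p q hp hpq hq
        rw [h3 p (by omega) (by omega), h3 q (by omega) (by omega)]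
        exact hanti p q hp hpq hq
    · -- c < k : B2 witness (a, c+1)
      refine ⟨a, c + 1, ha1, by omega, by omega, Or.inr
        ⟨by omega, ?_, ?_, ?_, ?_, ?_, ?_⟩⟩
      · intro p q hp hpq hq
        rw [show c + 1 - 2 = c - 1 by omega] at hq
        rcases Nat.lt_or_ge q (c - 1) with hq' | hq'
        · rw [h3 p (by omega) (by omega), h3 q (by omega) (by omega)]
          exact hm1 p q hp hpq (by omega)
        · rw [show q = c - 1 by omega, h1]
          rcases Nat.lt_or_ge p (c - 1) with hp' | hp'
          · rw [h3 p (by omega) (by omega)]; exact key p hp (by omega)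
          · rw [show p = c - 1 by omega, h1]
      · intro _
        rw [show c + 1 - 2 = c - 1 by omega, h1, h3 (c + 1) (by omega) (by omega)]
        exact hcmono c (c + 1) (le_refl _) (by omega) hlt
      · intro p q hp hpq hq
        rw [h3 p (by omega) (by omega), h3 q (by omega) (by omega)]
        exact hmono p q (by omega) hpq hq
      · rw [show c + 1 - 1 = c by omega, h2, h3 k (by omega) (by omega)]
        exact hbd
      · intro h2a
        rw [show c + 1 - 1 = c by omega, h2, h3 (a - 1) (by omega) (by omega)]
        exact hbd3 h2a
      · intro p q hp hpq hq
        rw [h3 p (by omega) (by omega), h3 q (by omega) (by omega)]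
        exact hanti p q hp hpq hq

end St6
namespace St6

lemma enat_add_one_le {x y : ℕ∞} (h : x < y) : x + 1 ≤ y := by
  cases x with
  | top => simp at h
  | coe x =>
    cases y with
    | top => exact le_top
    | coe y =>
      have : x < y := by exact_mod_cast h
      exact_mod_cast this

lemma stepB_shape {m m' : ℕ → ℕ∞} {k c : ℕ}
    (h2c : 2 ≤ c) (hck : c ≤ k)
    (hN : N1 m k c ∨ N2 m k c) (hviol : m c < m (c - 1)) (hcmono : MonoL m c k)
    (hblk : ∀ e, c ≤ e → e ≤ k → (m e = m c → m' e = m c + 1) ∧ (m e ≠ m c → m' e = m e))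
    (hlo : ∀ e, e < c → m' e = m e) : LShapeF m' k := by
  have hmono' : MonoL m' c k := by
    intro p q hp hpq hq
    by_cases hpb : m p = m c
    · by_cases hqb : m q = m c
      · rw [(hblk p hp (by omega)).1 hpb, (hblk q (by omega) hq).1 hqb]
      · rw [(hblk p hp (by omega)).1 hpb, (hblk q (by omega) hq).2 hqb]
        exact enat_add_one_le (lt_of_le_of_ne (hcmono c q (le_refl _) (by omega) hq) (Ne.symm hqb))
    · by_cases hqb : m q = m c
      · exact absurd (le_antisymm (hqb ▸ hcmono p q hp hpq hq)
          (hcmono c p (le_refl _) hp (by omega))) (fun h => hpb h)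
      · rw [(hblk p hp (by omega)).2 hpb, (hblk q (by omega) hq).2 hqb]
        exact hcmono p q hp hpq hq
  have hbd' : m' k ≤ m' (c - 1) := by
    rw [hlo (c - 1) (by omega)]
    by_cases hkb : m k = m c
    · rw [(hblk k hck (le_refl _)).1 hkb]
      exact enat_add_one_le hviol
    · rw [(hblk k hck (le_refl _)).2 hkb]
      rcases hN with ⟨_, _, hbd⟩ | ⟨a, _, _, _, _, _, _, hbd, _⟩ <;> exact hbd
  rcases hN with ⟨hanti, hmono, hbd⟩ | ⟨a, ha1, hale, hanti, hm1, hbd1, hmono, hbd, hbd3⟩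
  · refine ⟨c, c, by omega, le_refl _, hck, Or.inl ⟨hmono', fun _ => hbd', ?_⟩⟩
    intro p q hp hpq hq
    rw [hlo p (by omega), hlo q (by omega)]
    exact hanti p q hp hpq hq
  · refine ⟨a, c, ha1, by omega, hck, Or.inr ⟨h2c, ?_, ?_, hmono', hbd', ?_, ?_⟩⟩
    · intro p q hp hpq hq
      rw [hlo p (by omega), hlo q (by omega)]
      exact hm1 p q hp hpq hq
    · intro _
      rw [hlo (c - 2) (by omega)]
      have : m c ≤ m' c := by
        by_cases hcb : m c = m c
        · rw [(hblk c (le_refl _) hck).1 hcb]; exact le_self_add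
        · exact absurd rfl hcb
      exact le_trans hbd1 this
    · intro h2a
      rw [hlo (c - 1) (by omega), hlo (a - 1) (by omega)]
      exact hbd3 h2a
    · intro p q hp hpq hq
      rw [hlo p (by omega), hlo q (by omega)]
      exact hanti p q hp hpq hq

lemma stepA_merge_shape {m m' : ℕ → ℕ∞} {k c : ℕ}
    (h2c : 2 ≤ c) (hck : c ≤ k)
    (hN : N1 m k c ∨ N2 m k c) (hviol : m c < m (c - 1)) (hcmono : MonoL m c k)
    (hlo : ∀ e, e ≤ c - 2 → m' e = m e) (hmid : m' (c - 1) = m c)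
    (hhi : ∀ e, c ≤ e → m' e = m (e + 1)) : LShapeF m' (k - 1) := by
  rcases hN with ⟨hanti, hmono, hbd⟩ | ⟨a, ha1, hale, hanti, hm1, hbd1, hmono, hbd, hbd3⟩
  · -- B1 witness (c-1, c-1)
    refine ⟨c - 1, c - 1, by omega, le_refl _, by omega, Or.inl ⟨?_, ?_, ?_⟩⟩
    · intro p q hp hpq hq
      rcases Nat.lt_or_ge p c with hp' | hp'
      · rw [show p = c - 1 by omega, hmid]
        rcases Nat.lt_or_ge q c with hq' | hq'
        · rw [show q = c - 1 by omega, hmid]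
        · rw [hhi q hq']
          exact hcmono c (q + 1) (le_refl _) (by omega) (by omega)
      · rw [hhi p hp', hhi q (by omega)]
        exact hcmono (p + 1) (q + 1) (by omega) (by omega) (by omega)
    · intro h2c1
      rw [hlo (c - 1 - 1) (by omega)]
      rcases Nat.lt_or_ge (k - 1) c with hk' | hk'
      · rw [show k - 1 = c - 1 by omega, hmid]
        calc m c ≤ m (c - 1) := hviol.le
        _ ≤ m (c - 1 - 1) := hanti (c - 1 - 1) (c - 1) (by omega) (by omega) (le_refl _)
      · rw [hhi (k - 1) hk', show k - 1 + 1 = k by omega]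
        calc m k ≤ m (c - 1) := hbd
        _ ≤ m (c - 1 - 1) := hanti (c - 1 - 1) (c - 1) (by omega) (by omega) (le_refl _)
    · intro p q hp hpq hq
      rw [hlo p (by omega), hlo q (by omega)]
      exact hanti p q hp hpq (by omega)
  · -- B1 witness (a, a)
    have key : ∀ p, a ≤ p → p ≤ c - 2 → m p ≤ m c := fun p hp hpc =>
      le_trans (hm1 p (c - 2) hp hpc (le_refl _)) hbd1
    refine ⟨a, a, ha1, le_refl _, by omega, Or.inl ⟨?_, ?_, ?_⟩⟩
    · intro p q hp hpq hq
      rcases Nat.lt_or_ge q (c - 1) with hq' | hq'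
      · rw [hlo p (by omega), hlo q (by omega)]
        exact hm1 p q hp hpq (by omega)
      · rcases Nat.lt_or_ge q c with hq'' | hq''
        · rw [show q = c - 1 by omega, hmid]
          rcases Nat.lt_or_ge p (c - 1) with hp' | hp'
          · rw [hlo p (by omega)]; exact key p hp (by omega)
          · rw [show p = c - 1 by omega, hmid]
        · rw [hhi q hq'']
          rcases Nat.lt_or_ge p (c - 1) with hp' | hp'
          · rw [hlo p (by omega)]
            exact le_trans (key p hp (by omega)) (hcmono c (q + 1) (le_refl _) (by omega) (by omega))
          · rcases Nat.lt_or_ge p c with hp'' | hp''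
            · rw [show p = c - 1 by omega, hmid]
              exact hcmono c (q + 1) (le_refl _) (by omega) (by omega)
            · rw [hhi p hp'']
              exact hcmono (p + 1) (q + 1) (by omega) (by omega) (by omega)
    · intro h2a
      rw [hlo (a - 1) (by omega)]
      rcases Nat.lt_or_ge (k - 1) c with hk' | hk'
      · rw [show k - 1 = c - 1 by omega, hmid]
        calc m c ≤ m (c - 1) := hviol.le
        _ ≤ m (a - 1) := hbd3 h2a
      · rw [hhi (k - 1) hk', show k - 1 + 1 = k by omega]
        exact le_trans hbd (hbd3 h2a)
    · intro p q hp hpq hq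
      rw [hlo p (by omega), hlo q (by omega)]
      exact hanti p q hp hpq hq

end St6
namespace St6

def InvD (D : Dg) : Prop :=
  (∀ b ∈ D, 1 ≤ b.1 ∧ 1 ≤ b.2) ∧ D.Nonempty ∧ RowConvex D ∧
  (∀ p p', p ∈ SS D → p' ∈ SS D → p ≤ p' → rRow D p' ≤ rRow D p) ∧
  LShape (compress D) (SS D).card

lemma rowConvex_compress {D : Dg} (h : RowConvex D) : RowConvex (compress D) := by
  intro c j j' j'' hj hj' hle hle'
  obtain ⟨p, hpD, hpr⟩ := compress_mem.1 hj
  obtain ⟨p', hp'D, hp'r⟩ := compress_mem.1 hj'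
  have hpS : p ∈ SS D := mem_SS.2 ⟨j, mem_row.2 hpD⟩
  have hp'S : p' ∈ SS D := mem_SS.2 ⟨j', mem_row.2 hp'D⟩
  have : p = p' := rank_injOn hpS hp'S (by rw [hpr, hp'r])
  subst this
  exact compress_mem.2 ⟨p, h p j j' j'' hpD hp'D hle hle', hpr⟩

lemma rRow_compress {D : Dg} {p : ℕ} (hp : p ∈ SS D) :
    rRow (compress D) (rank D p) = rRow D p := by
  rw [rRow, row_compress hp, rRow]

lemma lRow_compress {D : Dg} {p : ℕ} (hp : p ∈ SS D) :
    lRow (compress D) (rank D p) = lRow D p := by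
  rw [lRow, row_compress hp, lRow]

lemma comp_row_empty {D : Dg} {c : ℕ} (h : ¬(1 ≤ c ∧ c ≤ (SS D).card)) :
    row (compress D) c = ∅ := by
  rw [← Finset.not_nonempty_iff_eq_empty]
  intro hne
  exact h (row_compress_nonempty.1 hne)

lemma comp_lRow_top {D : Dg} {c : ℕ} (h : ¬(1 ≤ c ∧ c ≤ (SS D).card)) :
    lRow (compress D) c = ⊤ := lRow_eq_top.2 (comp_row_empty h)

lemma inv_almostSkew {D : Dg} (h : InvD D) : AlmostSkew (compress D) (SS D).card := by
  obtain ⟨hb, hne, hconv, hr, hL⟩ := h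
  refine ⟨fun p => row_compress_nonempty, rowConvex_compress hconv, ?_, hL⟩
  intro c c' h1 hcc' h2
  obtain ⟨p, hp, hpr⟩ := rank_surj h1 (le_trans hcc' h2)
  obtain ⟨p', hp', hp'r⟩ := rank_surj (le_trans h1 hcc') h2
  have hpp' : p ≤ p' := (rank_le_iff hp hp').1 (by rw [hpr, hp'r]; exact hcc')
  rw [← hpr, ← hp'r, rRow_compress hp, rRow_compress hp']
  exact hr p p' hp hp' hpp'

lemma mem_interval {D : Dg} (hconv : RowConvex D) {p q : ℕ} :
    (p, q) ∈ D ↔ (row D p).Nonempty ∧ lRow D p ≤ (q : ℕ∞) ∧ q ≤ rRow D p := by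
  constructor
  · intro h
    exact ⟨⟨q, mem_row.2 h⟩, lRow_le h, le_rRow h⟩
  · rintro ⟨hne, h1, h2⟩
    obtain ⟨jl, hjl, hjle⟩ := exists_lRow hne
    have hjlq : jl ≤ q := by exact_mod_cast hjle ▸ h1
    exact hconv p jl (rRow D p) q hjl (rRow_mem hne) hjlq h2

lemma maxviol_mono {D : Dg} {i : ℕ} (h : MaxViolation D i) :
    ∀ p q, i ≤ p → p ≤ q → lRow D p ≤ lRow D q := by
  obtain ⟨⟨h2i, _⟩, hmax⟩ := h
  intro p q hip hpq
  induction q with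
  | zero => rw [Nat.le_zero.1 hpq]
  | succ n ih =>
    rcases Nat.lt_or_ge p (n + 1) with h' | h'
    · refine le_trans (ih (by omega)) ?_
      by_contra hc
      push_neg at hc
      have : Violation D (n + 1) := ⟨by omega, by simpa using hc⟩
      have := hmax _ this
      omega
    · rw [show p = n + 1 by omega]

lemma viol_row_nonempty {D : Dg} {i : ℕ} (h : Violation D i) : (row D i).Nonempty := by
  by_contra hc
  rw [Finset.not_nonempty_iff_eq_empty] at hc
  have : lRow D i = ⊤ := lRow_eq_top.2 hc
  exact absurd (this ▸ h.2) (by simp)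

end St6
namespace St6

lemma SS_congr {D D' : Dg} (h : ∀ p, (row D' p).Nonempty ↔ (row D p).Nonempty) :
    SS D' = SS D := by
  ext p; rw [mem_SS, mem_SS]; exact h p

lemma row_congr2 {E E' : Dg} {p p' : ℕ} (h : ∀ q, (p, q) ∈ E' ↔ (p', q) ∈ E) :
    row E' p = row E p' := by
  ext q; rw [mem_row, mem_row]; exact h q

lemma rRow_congr {E E' : Dg} {p : ℕ} (h : ∀ q, (p, q) ∈ E' ↔ (p, q) ∈ E) :
    rRow E' p = rRow E p := by
  rw [rRow, row_congr h, rRow]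

lemma lRow_congr {E E' : Dg} {p : ℕ} (h : ∀ q, (p, q) ∈ E' ↔ (p, q) ∈ E) :
    lRow E' p = lRow E p := by
  rw [lRow, row_congr h, lRow]

lemma rank_congr {D D' : Dg} (h : SS D' = SS D) (x : ℕ) : rank D' x = rank D x := by
  rw [rank, rank, h]

lemma cast_lt_cast {a b : ℕ} : (a : ℕ∞) < (b : ℕ∞) ↔ a < b := Nat.cast_lt
lemma cast_le_cast {a b : ℕ} : (a : ℕ∞) ≤ (b : ℕ∞) ↔ a ≤ b := Nat.cast_le

/-- Step A when row `i-1` is empty : `compress D' = compress D`. -/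
lemma preserveA_empty {D D' : Dg} {i : ℕ} (hInv : InvD D) (hmv : MaxViolation D i)
    (hIs : IsStepA D D' i) (hE : i - 1 ∉ SS D) : InvD D' := by
  obtain ⟨hbox, hDne, hconv, hrant, hL⟩ := hInv
  obtain ⟨⟨h2i, hviol⟩, hmax⟩ := hmv
  have hrowi : (row D i).Nonempty := viol_row_nonempty ⟨h2i, hviol⟩
  have hiS : i ∈ SS D := mem_SS.2 hrowi
  have hi1ne : row D (i - 1) = ∅ := by
    by_contra hc
    exact hE (mem_SS.2 (Finset.nonempty_of_ne_empty hc))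
  have hLtop : lRow D (i - 1) = ⊤ := lRow_eq_top.2 hi1ne
  obtain ⟨jl, hjlD, hjl⟩ := exists_lRow hrowi
  -- row descriptions
  have hri1 : ∀ q, ((i - 1, q) ∈ D' ↔ (i, q) ∈ D) := by
    intro q
    by_cases hq : lRow D i ≤ (q : ℕ∞)
    · exact (hIs (i - 1) q).2.1 rfl ⟨hq, hLtop ▸ (by exact_mod_cast WithTop.coe_lt_top q)⟩
    · have h3 := (hIs (i - 1) q).2.2 (by
        rintro ⟨-, hInL⟩; exact hq hInL.1)
      rw [h3]
      constructor
      · intro h; exact absurd (mem_row.2 h) (hi1ne ▸ Finset.notMem_empty q)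
      · intro h; exact absurd (lRow_le h) hq
  have hri : ∀ q, ((i, q) ∈ D' ↔ False) := by
    intro q
    by_cases hq : lRow D i ≤ (q : ℕ∞)
    · rw [(hIs i q).1 rfl ⟨hq, hLtop ▸ (by exact_mod_cast WithTop.coe_lt_top q)⟩]
      constructor
      · intro h; exact absurd (mem_row.2 h) (hi1ne ▸ Finset.notMem_empty q)
      · exact False.elim
    · rw [(hIs i q).2.2 (by rintro ⟨-, hInL⟩; exact hq hInL.1)]
      constructor
      · intro h; exact absurd (lRow_le h) hq
      · exact False.elim
  have hro : ∀ p, p ≠ i → p ≠ i - 1 → ∀ q, ((p, q) ∈ D' ↔ (p, q) ∈ D) := by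
    intro p hpi hpi1 q
    exact (hIs p q).2.2 (by rintro ⟨h | h, -⟩ <;> [exact hpi h; exact hpi1 h])
  -- SS D'
  have hSS' : SS D' = insert (i - 1) ((SS D).erase i) := by
    ext p
    rw [mem_SS, Finset.mem_insert, Finset.mem_erase]
    by_cases hp : p = i - 1
    · subst hp
      simp only [true_or, iff_true]
      exact ⟨jl, mem_row.2 ((hri1 jl).2 hjlD)⟩
    · by_cases hp' : p = i
      · subst hp'
        simp only [hp, false_or]
        constructor
        · rintro ⟨q, hq⟩; exact absurd (mem_row.1 hq) (by rw [hri q]; exact id)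
        · rintro ⟨h, -⟩; exact absurd rfl h
      · rw [row_congr (hro p hp' hp)]
        simp only [hp, false_or]
        rw [← mem_SS]
        constructor
        · intro h; exact ⟨hp', h⟩
        · exact And.right
  have hi1S' : i - 1 ∈ SS D' := by rw [hSS']; exact Finset.mem_insert_self _ _
  have hcard' : (SS D').card = (SS D).card := by
    rw [hSS', Finset.card_insert_of_notMem, Finset.card_erase_of_mem hiS]
    · have : 1 ≤ (SS D).card := Finset.card_pos.2 ⟨i, hiS⟩
      omega
    · intro h
      exact hE (Finset.mem_erase.1 h).2
  -- ranks
  have hrk_lo : ∀ x, x < i - 1 → rank D' x = rank D x := by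
    intro x hx
    rw [rank, rank]
    congr 1
    ext p
    simp only [Finset.mem_filter, hSS', Finset.mem_insert, Finset.mem_erase]
    constructor
    · rintro ⟨h | ⟨h1, h2⟩, hpx⟩
      · omega
      · exact ⟨h2, hpx⟩
    · rintro ⟨hp, hpx⟩
      exact ⟨Or.inr ⟨by omega, hp⟩, hpx⟩
  have hrk_hi : ∀ x, i ≤ x → rank D' x = rank D x := by
    intro x hx
    have hset : (SS D').filter (fun p => p ≤ x) =
        insert (i - 1) (((SS D).filter (fun p => p ≤ x)).erase i) := by
      ext p
      simp only [Finset.mem_filter, hSS', Finset.mem_insert, Finset.mem_erase]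
      constructor
      · rintro ⟨h | ⟨h1, h2⟩, hpx⟩
        · exact Or.inl h
        · exact Or.inr ⟨h1, h2, hpx⟩
      · rintro (h | ⟨h1, h2, h3⟩)
        · exact ⟨Or.inl h, by omega⟩
        · exact ⟨Or.inr ⟨h1, h2⟩, h3⟩
    rw [rank, rank, hset, Finset.card_insert_of_notMem (by
        simp only [Finset.mem_erase, Finset.mem_filter]
        rintro ⟨-, h, -⟩; exact hE h),
      Finset.card_erase_of_mem (s := (SS D).filter (fun p => p ≤ x))
        (Finset.mem_filter.2 ⟨hiS, hx⟩)]
    have : 1 ≤ ((SS D).filter (fun p => p ≤ x)).card :=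
      Finset.card_pos.2 ⟨i, Finset.mem_filter.2 ⟨hiS, hx⟩⟩
    omega
  have hrk_i1 : rank D' (i - 1) = rank D i := by
    have h1 : rank D' (i - 1) = rank D' (i - 1 - 1) + 1 := rank_sub_one (by omega) hi1S'
    have h2 : rank D (i - 1) = rank D (i - 1 - 1) := rank_not_mem (by omega) hE
    have h3 : rank D i = rank D (i - 1) + 1 := rank_sub_one (by omega) hiS
    rw [h1, hrk_lo (i - 1 - 1) (by omega), ← h2, h3]
  -- compress equality
  have hcomp : compress D' = compress D := by
    ext ⟨c, q⟩
    rw [compress_mem, compress_mem]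
    constructor
    · rintro ⟨p, hpD', hpr⟩
      by_cases hp1 : p = i - 1
      · subst hp1
        exact ⟨i, (hri1 q).1 hpD', by rw [← hpr, hrk_i1]⟩
      · by_cases hp2 : p = i
        · rw [hp2] at hpD'; exact absurd hpD' (by rw [hri q]; exact id)
        · refine ⟨p, (hro p hp2 hp1 q).1 hpD', ?_⟩
          rw [← hpr]
          rcases Nat.lt_or_ge p i with h | h
          · exact (hrk_lo p (by omega)).symm
          · exact (hrk_hi p (by omega)).symm
    · rintro ⟨p, hpD, hpr⟩
      by_cases hp2 : p = i
      · refine ⟨i - 1, (hri1 q).2 (by rwa [hp2] at hpD), ?_⟩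
        rw [hrk_i1, ← hp2, hpr]
      · by_cases hp1 : p = i - 1
        · rw [hp1] at hpD
          exact absurd (mem_row.2 hpD) (hi1ne ▸ Finset.notMem_empty q)
        · refine ⟨p, (hro p hp2 hp1 q).2 hpD, ?_⟩
          rcases Nat.lt_or_ge p i with h | h
          · rw [hrk_lo p (by omega), hpr]
          · rw [hrk_hi p (by omega), hpr]
  -- assemble InvD D'
  refine ⟨?_, ⟨(i - 1, jl), (hri1 jl).2 hjlD⟩, ?_, ?_, ?_⟩
  · rintro ⟨p, q⟩ hb
    by_cases hp1 : p = i - 1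
    · subst hp1
      have := hbox _ ((hri1 q).1 hb)
      exact ⟨by omega, this.2⟩
    · by_cases hp2 : p = i
      · subst hp2; exact absurd hb (by rw [hri q]; exact id)
      · exact hbox _ ((hro p hp2 hp1 q).1 hb)
  · intro p j j' j'' hj hj' hle hle'
    by_cases hp1 : p = i - 1
    · subst hp1
      exact (hri1 j'').2 (hconv i j j' j'' ((hri1 j).1 hj) ((hri1 j').1 hj') hle hle')
    · by_cases hp2 : p = i
      · subst hp2; exact absurd hj (by rw [hri j]; exact id)
      · exact (hro p hp2 hp1 j'').2
          (hconv p j j' j'' ((hro p hp2 hp1 j).1 hj) ((hro p hp2 hp1 j').1 hj') hle hle')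
  · -- r antitone on SS D'
    intro p p' hp hp' hpp'
    have hval : ∀ x, x ∈ SS D' → rRow D' x = rRow D (if x = i - 1 then i else x) := by
      intro x hx
      by_cases h1 : x = i - 1
      · subst h1
        rw [if_pos rfl, rRow, row_congr2 hri1, rRow]
      · rw [if_neg h1, rRow, row_congr (hro x ?_ h1), rRow]
        intro h2
        subst h2
        rw [hSS', Finset.mem_insert, Finset.mem_erase] at hx
        rcases hx with h | ⟨h, -⟩
        · omega
        · exact absurd rfl h
    rw [hval p hp, hval p' hp']
    have hmem : ∀ x, x ∈ SS D' → (if x = i - 1 then i else x) ∈ SS D := by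
      intro x hx
      by_cases h1 : x = i - 1
      · rw [if_pos h1]; exact hiS
      · rw [if_neg h1]
        rw [hSS', Finset.mem_insert, Finset.mem_erase] at hx
        rcases hx with h | ⟨-, h⟩
        · exact absurd h h1
        · exact h
    apply hrant _ _ (hmem p hp) (hmem p' hp')
    by_cases h1 : p = i - 1
    · rw [if_pos h1]
      by_cases h2 : p' = i - 1
      · rw [if_pos h2]
      · rw [if_neg h2]
        have hp'S : p' ∈ SS D ∧ p' ≠ i := by
          rw [hSS', Finset.mem_insert, Finset.mem_erase] at hp'
          rcases hp' with h | ⟨hne, hmem'⟩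
          · exact absurd h h2
          · exact ⟨hmem', hne⟩
        omega
    · rw [if_neg h1]
      by_cases h2 : p' = i - 1
      · rw [if_pos h2]; omega
      · rw [if_neg h2]; exact hpp'
  · rw [hcomp, hcard']
    exact hL

end St6
namespace St6

lemma comp_mono {D : Dg} {i : ℕ} (hmv : MaxViolation D i) (hiS : i ∈ SS D) :
    MonoL (lRow (compress D)) (rank D i) (SS D).card := by
  intro e e' he hee' he'
  obtain ⟨p, hp, hpr⟩ := rank_surj (le_trans (rank_pos hiS) he) (le_trans hee' he')
  obtain ⟨p', hp', hp'r⟩ := rank_surj (le_trans (rank_pos hiS) (le_trans he hee')) he'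
  have hip : i ≤ p := (rank_le_iff hiS hp).1 (by rw [hpr]; exact he)
  have hpp' : p ≤ p' := (rank_le_iff hp hp').1 (by rw [hpr, hp'r]; exact hee')
  rw [← hpr, ← hp'r, lRow_compress hp, lRow_compress hp']
  exact maxviol_mono hmv p p' hip hpp'

lemma preserveA_main {D D' : Dg} {i : ℕ} (hInv : InvD D) (hmv : MaxViolation D i)
    (hA : StepAOk D i) (hIs : IsStepA D D' i) (hE : i - 1 ∈ SS D) : InvD D' := by
  obtain ⟨hbox, hDne, hconv, hrant, hL⟩ := hInv
  have hmax := hmv.2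
  have h2i : 2 ≤ i := hmv.1.1
  have hviol : lRow D i < lRow D (i - 1) := hmv.1.2
  have hrowi : (row D i).Nonempty := viol_row_nonempty hmv.1
  have hiS : i ∈ SS D := mem_SS.2 hrowi
  have hrowi1 : (row D (i - 1)).Nonempty := mem_SS.1 hE
  obtain ⟨jl, hjlD, hjl⟩ := exists_lRow hrowi
  obtain ⟨jl1, hjl1D, hjl1⟩ := exists_lRow hrowi1
  have hjlt : jl < jl1 := by rw [← cast_lt_cast, hjl, hjl1]; exact hviol
  have hok : lRow D (i - 1) - 1 ≤ (rRow D i : ℕ∞) := by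
    rcases hA.2 with h | h
    · exact h
    · exact absurd h (Finset.nonempty_iff_ne_empty.1 hrowi1)
  have hokn : jl1 - 1 ≤ rRow D i := by
    rw [← cast_le_cast]
    calc ((jl1 - 1 : ℕ) : ℕ∞) = (jl1 : ℕ∞) - 1 := by
          rw [ENat.coe_sub]; rfl
    _ = lRow D (i - 1) - 1 := by rw [hjl1]
    _ ≤ (rRow D i : ℕ∞) := hok
  have hInL : ∀ q, InL D i q ↔ (jl ≤ q ∧ q < jl1) := by
    intro q; rw [InL, ← hjl, ← hjl1, cast_le_cast, cast_lt_cast]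
  have hriv : ∀ q, ((i, q) ∈ D ↔ (jl ≤ q ∧ q ≤ rRow D i)) := by
    intro q
    constructor
    · intro h; exact ⟨by rw [← cast_le_cast, hjl]; exact lRow_le h, le_rRow h⟩
    · rintro ⟨h1, h2⟩
      exact (mem_interval hconv).2 ⟨hrowi, by rw [← hjl]; exact_mod_cast h1, h2⟩
  have hri1v : ∀ q, ((i - 1, q) ∈ D ↔ (jl1 ≤ q ∧ q ≤ rRow D (i - 1))) := by
    intro q
    constructor
    · intro h; exact ⟨by rw [← cast_le_cast, hjl1]; exact lRow_le h, le_rRow h⟩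
    · rintro ⟨h1, h2⟩
      exact (mem_interval hconv).2 ⟨hrowi1, by rw [← hjl1]; exact_mod_cast h1, h2⟩
  have hl1r1 : jl1 ≤ rRow D (i - 1) := le_rRow hjl1D
  have hlri : jl ≤ rRow D i := le_rRow hjlD
  have hrk1 : rank D i = rank D (i - 1) + 1 := rank_sub_one (by omega) hiS
  have h2c : 2 ≤ rank D i := by
    have := rank_pos hE; omega
  have hck : rank D i ≤ (SS D).card := rank_le_card
  have hcmono := comp_mono hmv hiS
  have hviolc : lRow (compress D) (rank D i) < lRow (compress D) (rank D i - 1) := by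
    rw [lRow_compress hiS, show rank D i - 1 = rank D (i - 1) by omega, lRow_compress hE]
    exact hviol
  have hN := normalize (lshape_iff.1 hL) h2c hck hcmono hviolc
  have hro : ∀ p, p ≠ i → p ≠ i - 1 → ∀ q, ((p, q) ∈ D' ↔ (p, q) ∈ D) := by
    intro p hpi hpi1 q
    exact (hIs p q).2.2 (by rintro ⟨h | h, -⟩ <;> [exact hpi h; exact hpi1 h])
  by_cases hsurv : jl1 ≤ rRow D i
  · -- survive case
    have hri' : ∀ q, ((i, q) ∈ D' ↔ (jl1 ≤ q ∧ q ≤ rRow D i)) := by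
      intro q
      by_cases hq : jl ≤ q ∧ q < jl1
      · rw [(hIs i q).1 rfl ((hInL q).2 hq), hri1v q]
        constructor
        · rintro ⟨h1, -⟩; omega
        · rintro ⟨h1, -⟩; omega
      · rw [(hIs i q).2.2 (by rintro ⟨-, hInL'⟩; exact hq ((hInL q).1 hInL')), hriv q]
        constructor
        · rintro ⟨h1, h2⟩; exact ⟨by omega, h2⟩
        · rintro ⟨h1, h2⟩; exact ⟨by omega, h2⟩
    have hri1' : ∀ q, ((i - 1, q) ∈ D' ↔ (jl ≤ q ∧ q ≤ rRow D (i - 1))) := by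
      intro q
      by_cases hq : jl ≤ q ∧ q < jl1
      · rw [(hIs (i - 1) q).2.1 rfl ((hInL q).2 hq), hriv q]
        constructor
        · rintro ⟨h1, -⟩; exact ⟨h1, by omega⟩
        · rintro ⟨h1, -⟩; exact ⟨h1, by omega⟩
      · rw [(hIs (i - 1) q).2.2 (by
            rintro ⟨-, hInL'⟩; exact hq ((hInL q).1 hInL')), hri1v q]
        constructor
        · rintro ⟨h1, h2⟩; exact ⟨by omega, h2⟩
        · rintro ⟨h1, h2⟩; exact ⟨by omega, h2⟩
    obtain ⟨hlrow_i, hrrow_i, hne_i⟩ := row_interval hri' hsurv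
    obtain ⟨hlrow_i1, hrrow_i1, hne_i1⟩ := row_interval hri1' (by omega)
    have hSS' : SS D' = SS D := by
      apply SS_congr
      intro p
      by_cases h1 : p = i
      · subst h1; exact iff_of_true hne_i hrowi
      · by_cases h2 : p = i - 1
        · subst h2; exact iff_of_true hne_i1 hrowi1
        · rw [row_congr (hro p h1 h2)]
    have hrk' := rank_congr hSS'
    have hcard' : (SS D').card = (SS D).card := by rw [hSS']
    refine ⟨?_, ⟨(i - 1, jl), (hri1' jl).2 ⟨le_refl _, by omega⟩⟩, ?_, ?_, ?_⟩
    · rintro ⟨p, q⟩ hb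
      by_cases h1 : p = i
      · subst h1
        have := (hri' q).1 hb
        have := (hbox _ hjl1D).2
        exact ⟨by omega, by omega⟩
      · by_cases h2 : p = i - 1
        · subst h2
          have := (hri1' q).1 hb
          have := (hbox _ hjlD).2
          exact ⟨by omega, by omega⟩
        · exact hbox _ ((hro p h1 h2 q).1 hb)
    · intro p j j' j'' hj hj' hle hle'
      by_cases h1 : p = i
      · subst h1
        have ha := (hri' j).1 hj
        have hb' := (hri' j').1 hj'
        exact (hri' j'').2 ⟨by omega, by omega⟩
      · by_cases h2 : p = i - 1
        · subst h2
          have ha := (hri1' j).1 hj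
          have hb' := (hri1' j').1 hj'
          exact (hri1' j'').2 ⟨by omega, by omega⟩
        · exact (hro p h1 h2 j'').2
            (hconv p j j' j'' ((hro p h1 h2 j).1 hj) ((hro p h1 h2 j').1 hj') hle hle')
    · intro p p' hp hp' hpp'
      have hval : ∀ x, rRow D' x = rRow D x := by
        intro x
        by_cases h1 : x = i
        · subst h1; rw [hrrow_i]
        · by_cases h2 : x = i - 1
          · subst h2; rw [hrrow_i1]
          · rw [rRow, row_congr (hro x h1 h2), rRow]
      rw [hval, hval]
      exact hrant p p' (hSS' ▸ hp) (hSS' ▸ hp') hpp'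
    · rw [lshape_iff, hcard']
      refine stepA_survive_shape h2c hck hN hviolc hcmono ?_ ?_ ?_
      · have hi1S' : i - 1 ∈ SS D' := hSS'.symm ▸ hE
        rw [show rank D i - 1 = rank D' (i - 1) by rw [hrk']; omega,
          lRow_compress hi1S', hlrow_i1, lRow_compress hiS, ← hjl]
      · have hiS' : i ∈ SS D' := hSS'.symm ▸ hiS
        rw [show rank D i = rank D' i from (hrk' i).symm] 
        rw [lRow_compress hiS', hlrow_i,
          show rank D' i - 1 = rank D (i - 1) by rw [hrk']; omega, lRow_compress hE, ← hjl1]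
      · intro e he1 he2
        by_cases hein : 1 ≤ e ∧ e ≤ (SS D).card
        · obtain ⟨p, hp, hpr⟩ := rank_surj hein.1 hein.2
          have hpi : p ≠ i := fun h => he2 (by rw [← hpr, h])
          have hpi1 : p ≠ i - 1 := by
            intro h
            apply he1
            rw [← hpr, h]
            omega
          have hpS' : p ∈ SS D' := hSS'.symm ▸ hp
          rw [← hpr, ← hrk' p, lRow_compress hpS', lRow, row_congr (hro p hpi hpi1), ← lRow,
            hrk' p, lRow_compress hp]
        · rw [comp_lRow_top (by rw [hcard']; exact hein), comp_lRow_top hein]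
  · -- merge case
    push_neg at hsurv
    have hreq : rRow D i = jl1 - 1 := by omega
    have hri' : ∀ q, ((i, q) ∈ D' ↔ False) := by
      intro q
      by_cases hq : jl ≤ q ∧ q < jl1
      · rw [(hIs i q).1 rfl ((hInL q).2 hq), hri1v q]
        constructor
        · rintro ⟨h1, -⟩; omega
        · exact False.elim
      · rw [(hIs i q).2.2 (by rintro ⟨-, hInL'⟩; exact hq ((hInL q).1 hInL')), hriv q]
        constructor
        · rintro ⟨h1, h2⟩; omega
        · exact False.elim
    have hri1' : ∀ q, ((i - 1, q) ∈ D' ↔ (jl ≤ q ∧ q ≤ rRow D (i - 1))) := by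
      intro q
      by_cases hq : jl ≤ q ∧ q < jl1
      · rw [(hIs (i - 1) q).2.1 rfl ((hInL q).2 hq), hriv q]
        constructor
        · rintro ⟨h1, -⟩; exact ⟨h1, by omega⟩
        · rintro ⟨h1, -⟩; exact ⟨h1, by omega⟩
      · rw [(hIs (i - 1) q).2.2 (by
            rintro ⟨-, hInL'⟩; exact hq ((hInL q).1 hInL')), hri1v q]
        constructor
        · rintro ⟨h1, h2⟩; exact ⟨by omega, h2⟩
        · rintro ⟨h1, h2⟩; exact ⟨by omega, h2⟩
    obtain ⟨hlrow_i1, hrrow_i1, hne_i1⟩ := row_interval hri1' (by omega)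
    have hrow_i_empty : row D' i = ∅ := by
      rw [← Finset.not_nonempty_iff_eq_empty]
      rintro ⟨q, hq⟩
      exact (hri' q).1 (mem_row.1 hq)
    have hSS' : SS D' = (SS D).erase i := by
      ext p
      rw [mem_SS, Finset.mem_erase]
      by_cases h1 : p = i
      · subst h1
        simp only [hrow_i_empty]
        constructor
        · rintro ⟨q, hq⟩; simp at hq
        · rintro ⟨h, -⟩; exact absurd rfl h
      · by_cases h2 : p = i - 1
        · subst h2
          exact iff_of_true hne_i1 ⟨h1, hE⟩
        · rw [row_congr (hro p h1 h2)]
          exact ⟨fun h => ⟨h1, mem_SS.2 h⟩, fun h => mem_SS.1 h.2⟩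
    have hi1S' : i - 1 ∈ SS D' := by
      rw [hSS']
      exact Finset.mem_erase.2 ⟨by omega, hE⟩
    have hcard' : (SS D').card = (SS D).card - 1 := by
      rw [hSS', Finset.card_erase_of_mem hiS]
    have hrk_lo : ∀ x, x < i → rank D' x = rank D x := by
      intro x hx
      rw [rank, rank]
      have hset : (SS D').filter (fun p => p ≤ x) = (SS D).filter (fun p => p ≤ x) := by
        ext p
        rw [hSS']
        simp only [Finset.mem_filter, Finset.mem_erase]
        constructor
        · rintro ⟨⟨-, h⟩, h'⟩; exact ⟨h, h'⟩
        · rintro ⟨h, h'⟩; exact ⟨⟨by omega, h⟩, h'⟩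
      rw [hset]
    have hrk_hi : ∀ x, i ≤ x → rank D' x = rank D x - 1 := by
      intro x hx
      have hset : (SS D').filter (fun p => p ≤ x) =
          ((SS D).filter (fun p => p ≤ x)).erase i := by
        ext p
        rw [hSS']
        simp only [Finset.mem_filter, Finset.mem_erase]
        tauto
      rw [rank, hset, Finset.card_erase_of_mem (s := (SS D).filter (fun p => p ≤ x))
        (Finset.mem_filter.2 ⟨hiS, hx⟩), rank]
    refine ⟨?_, ⟨(i - 1, jl), (hri1' jl).2 ⟨le_refl _, by omega⟩⟩, ?_, ?_, ?_⟩
    · rintro ⟨p, q⟩ hb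
      by_cases h1 : p = i
      · rw [h1] at hb; exact absurd hb (by rw [hri' q]; exact id)
      · by_cases h2 : p = i - 1
        · subst h2
          have := (hri1' q).1 hb
          have := (hbox _ hjlD).2
          exact ⟨by omega, by omega⟩
        · exact hbox _ ((hro p h1 h2 q).1 hb)
    · intro p j j' j'' hj hj' hle hle'
      by_cases h1 : p = i
      · rw [h1] at hj; exact absurd hj (by rw [hri' j]; exact id)
      · by_cases h2 : p = i - 1
        · subst h2
          have ha := (hri1' j).1 hj
          have hb' := (hri1' j').1 hj'
          exact (hri1' j'').2 ⟨by omega, by omega⟩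
        · exact (hro p h1 h2 j'').2
            (hconv p j j' j'' ((hro p h1 h2 j).1 hj) ((hro p h1 h2 j').1 hj') hle hle')
    · intro p p' hp hp' hpp'
      have hsub : ∀ x, x ∈ SS D' → x ∈ SS D ∧ x ≠ i := by
        intro x hx
        rw [hSS', Finset.mem_erase] at hx
        exact ⟨hx.2, hx.1⟩
      have hval : ∀ x, x ∈ SS D' → rRow D' x = rRow D x := by
        intro x hx
        by_cases h2 : x = i - 1
        · subst h2; rw [hrrow_i1]
        · rw [rRow, row_congr (hro x (hsub x hx).2 h2), rRow]
      rw [hval p hp, hval p' hp']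
      exact hrant p p' (hsub p hp).1 (hsub p' hp').1 hpp'
    · rw [lshape_iff, hcard']
      refine stepA_merge_shape h2c hck hN hviolc hcmono ?_ ?_ ?_
      · intro e he
        by_cases he1 : 1 ≤ e
        · obtain ⟨p, hp, hpr⟩ := rank_surj (D := D) he1 (by omega)
          have hpi1 : p < i - 1 := by
            by_contra hc
            push_neg at hc
            have : rank D (i - 1) ≤ rank D p := rank_mono hc
            omega
          have hpS' : p ∈ SS D' := by
            rw [hSS']
            exact Finset.mem_erase.2 ⟨by omega, hp⟩
          rw [← hpr, ← hrk_lo p (by omega), lRow_compress hpS',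
            lRow, row_congr (hro p (by omega) (by omega)), ← lRow, hrk_lo p (by omega),
            lRow_compress hp]
        · rw [comp_lRow_top (by omega), comp_lRow_top (by omega)]
      · rw [show rank D i - 1 = rank D' (i - 1) by rw [hrk_lo (i - 1) (by omega)]; omega,
          lRow_compress hi1S', hlrow_i1, lRow_compress hiS, ← hjl]
      · intro e he
        by_cases hein : e ≤ (SS D).card - 1
        · obtain ⟨p, hp, hpr⟩ := rank_surj (D := D') (c := e) (by omega) (by omega)
          have hpS : p ∈ SS D ∧ p ≠ i := by
            rw [hSS', Finset.mem_erase] at hp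
            exact ⟨hp.2, hp.1⟩
          have hpi : i + 1 ≤ p := by
            by_contra hc
            push_neg at hc
            have hpi1 : p ≤ i - 1 := by omega
            have : rank D p ≤ rank D (i - 1) := rank_mono hpi1
            have : rank D' p = rank D p := hrk_lo p (by omega)
            omega
          have hrkp : rank D p = e + 1 := by
            have := hrk_hi p (by omega)
            have := rank_pos hpS.1
            omega
          rw [← hrkp, lRow_compress hpS.1, ← hpr, lRow_compress hp,
            lRow, row_congr (hro p (by omega) (by omega)), ← lRow]
        · rw [comp_lRow_top (by omega), comp_lRow_top (by omega)]

end St6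
namespace St6

lemma preserveB {D D' : Dg} {i : ℕ} (hInv : InvD D) (hmv : MaxViolation D i)
    (hB : StepBOk D i) (hIs : IsStepB D D' i) : InvD D' := by
  obtain ⟨hbox, hDne, hconv, hrant, hL⟩ := hInv
  have h2i : 2 ≤ i := hmv.1.1
  have hviol : lRow D i < lRow D (i - 1) := hmv.1.2
  have hrowi : (row D i).Nonempty := viol_row_nonempty hmv.1
  have hiS : i ∈ SS D := mem_SS.2 hrowi
  obtain ⟨jl, hjlD, hjl⟩ := exists_lRow hrowi
  have hjl1 : 1 ≤ jl := (hbox _ hjlD).2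
  have hE : i - 1 ∈ SS D := by
    by_contra hc
    have hempty : row D (i - 1) = ∅ :=
      Finset.not_nonempty_iff_eq_empty.1 (fun h => hc (mem_SS.2 h))
    have h0 : rRow D (i - 1) = 0 := by rw [rRow, hempty]; rfl
    have h1 := hB.2
    have h2 : jl ≤ rRow D i := le_rRow hjlD
    omega
  have hrowi1 : (row D (i - 1)).Nonempty := mem_SS.1 hE
  have hr1pos : 1 ≤ rRow D (i - 1) := by
    obtain ⟨j1, hj1D, -⟩ := exists_lRow hrowi1
    have := (hbox _ hj1D).2
    have := le_rRow hj1D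
    omega
  have hrle : rRow D i + 1 ≤ rRow D (i - 1) := by
    have := hB.2; omega
  have hBrow_l : ∀ p, BRow D i p → lRow D p = (jl : ℕ∞) := fun p hp => by
    rw [hp.2, ← hjl]
  have hBrow_ne : ∀ p, BRow D i p → (row D p).Nonempty := by
    intro p hp
    by_contra hc
    have : lRow D p = ⊤ := lRow_eq_top.2 (Finset.not_nonempty_iff_eq_empty.1 hc)
    rw [hBrow_l p hp] at this
    exact (WithTop.coe_ne_top this).elim
  have hjlr : ∀ p, BRow D i p → jl ≤ rRow D p := by
    intro p hp
    obtain ⟨j0, hj0, hj0e⟩ := exists_lRow (hBrow_ne p hp)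
    have : (j0 : ℕ∞) = (jl : ℕ∞) := by rw [hj0e, hBrow_l p hp]
    have : j0 = jl := by exact_mod_cast this
    exact this ▸ le_rRow hj0
  have hBmem : ∀ p, BRow D i p → ∀ q, ((p, q) ∈ D ↔ (jl ≤ q ∧ q ≤ rRow D p)) := by
    intro p hp q
    constructor
    · intro h
      refine ⟨?_, le_rRow h⟩
      have := lRow_le h
      rw [hBrow_l p hp] at this
      exact_mod_cast this
    · rintro ⟨h1, h2⟩
      exact (mem_interval hconv).2 ⟨hBrow_ne p hp, by rw [hBrow_l p hp]; exact_mod_cast h1, h2⟩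
  have hrowB : ∀ p, BRow D i p → ∀ q, ((p, q) ∈ D' ↔ (jl + 1 ≤ q ∧ q ≤ rRow D p + 1)) := by
    intro p hp q
    rw [(hIs p q).1 hp, hBmem p hp q, hBrow_l p hp]
    have hcast : ((q : ℕ∞) ≠ (jl : ℕ∞)) ↔ q ≠ jl := by
      constructor
      · intro h h'; exact h (by exact_mod_cast h')
      · intro h h'; exact h (by exact_mod_cast h')
    rw [hcast]
    have := hjlr p hp
    constructor
    · rintro (⟨⟨ha, hb'⟩, hc⟩ | h) <;> omega
    · rintro ⟨h1, h2⟩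
      rcases Nat.lt_or_ge q (rRow D p + 1) with h | h
      · exact Or.inl ⟨⟨by omega, by omega⟩, by omega⟩
      · exact Or.inr (by omega)
  have hrowNB : ∀ p, ¬BRow D i p → ∀ q, ((p, q) ∈ D' ↔ (p, q) ∈ D) :=
    fun p hp q => (hIs p q).2 hp
  have hBdown : ∀ p p', i ≤ p → p ≤ p' → BRow D i p' → BRow D i p := by
    intro p p' h1 h2 hb
    refine ⟨h1, le_antisymm ?_ ?_⟩
    · rw [← hb.2]
      exact maxviol_mono hmv p p' h1 h2
    · exact maxviol_mono hmv i p (le_refl _) h1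
  have hSS' : SS D' = SS D := by
    apply SS_congr
    intro p
    by_cases hb : BRow D i p
    · exact iff_of_true
        ⟨jl + 1, mem_row.2 ((hrowB p hb (jl + 1)).2 ⟨le_refl _, by have := hjlr p hb; omega⟩)⟩
        (hBrow_ne p hb)
    · rw [row_congr (hrowNB p hb)]
  have hrk' := rank_congr hSS'
  have hcard' : (SS D').card = (SS D).card := by rw [hSS']
  have hrowB_int : ∀ p, BRow D i p →
      lRow D' p = ((jl + 1 : ℕ) : ℕ∞) ∧ rRow D' p = rRow D p + 1 ∧ (row D' p).Nonempty := by
    intro p hp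
    exact row_interval (hrowB p hp) (by have := hjlr p hp; omega)
  have hrk1 : rank D i = rank D (i - 1) + 1 := rank_sub_one (by omega) hiS
  have h2c : 2 ≤ rank D i := by have := rank_pos hE; omega
  have hck : rank D i ≤ (SS D).card := rank_le_card
  have hcmono := comp_mono hmv hiS
  have hviolc : lRow (compress D) (rank D i) < lRow (compress D) (rank D i - 1) := by
    rw [lRow_compress hiS, show rank D i - 1 = rank D (i - 1) by omega, lRow_compress hE]
    exact hviol
  have hN := normalize (lshape_iff.1 hL) h2c hck hcmono hviolc
  refine ⟨?_, ⟨(i, jl + 1), (hrowB i ⟨le_refl _, rfl⟩ (jl + 1)).2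
    ⟨le_refl _, by have := hjlr i ⟨le_refl _, rfl⟩; omega⟩⟩, ?_, ?_, ?_⟩
  · rintro ⟨p, q⟩ hb'
    by_cases hb : BRow D i p
    · have := (hrowB p hb q).1 hb'
      exact ⟨by have := hb.1; omega, by omega⟩
    · exact hbox _ ((hrowNB p hb q).1 hb')
  · intro p j j' j'' hj hj' hle hle'
    by_cases hb : BRow D i p
    · have ha := (hrowB p hb j).1 hj
      have hb' := (hrowB p hb j').1 hj'
      exact (hrowB p hb j'').2 ⟨by omega, by omega⟩
    · exact (hrowNB p hb j'').2
        (hconv p j j' j'' ((hrowNB p hb j).1 hj) ((hrowNB p hb j').1 hj') hle hle')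
  · intro p p' hp hp' hpp'
    have hpS : p ∈ SS D := hSS' ▸ hp
    have hp'S : p' ∈ SS D := hSS' ▸ hp'
    by_cases hb : BRow D i p
    · by_cases hb' : BRow D i p'
      · rw [(hrowB_int p hb).2.1, (hrowB_int p' hb').2.1]
        have := hrant p p' hpS hp'S hpp'
        omega
      · rw [(hrowB_int p hb).2.1, rRow_congr (hrowNB p' hb')]
        have := hrant p p' hpS hp'S hpp'
        omega
    · by_cases hb' : BRow D i p'
      · have hpi : p < i := by
          by_contra hc
          push_neg at hc
          exact hb (hBdown p p' hc hpp' hb')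
        rw [(hrowB_int p' hb').2.1, rRow_congr (hrowNB p hb)]
        have h1 := hrant i p' hiS hp'S hb'.1
        have h2 := hrant p (i - 1) hpS hE (by omega)
        omega
      · rw [rRow_congr (hrowNB p hb), rRow_congr (hrowNB p' hb')]
        exact hrant p p' hpS hp'S hpp'
  · rw [lshape_iff, hcard']
    refine stepB_shape h2c hck hN hviolc hcmono ?_ ?_
    · intro e he1 he2
      obtain ⟨p, hp, hpr⟩ := rank_surj (D := D) (c := e) (by omega) he2
      have hip : i ≤ p := (rank_le_iff hiS hp).1 (by omega)
      have hpS' : p ∈ SS D' := hSS'.symm ▸ hp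
      have hme : lRow (compress D) e = lRow D p := by rw [← hpr, lRow_compress hp]
      have hmc : lRow (compress D) (rank D i) = lRow D i := lRow_compress hiS
      constructor
      · intro heq
        have hbp : BRow D i p := ⟨hip, by rw [← hme, ← hmc]; exact heq⟩
        have : lRow (compress D') e = lRow D' p := by
          rw [← hpr, ← hrk' p, lRow_compress hpS']
        rw [this, (hrowB_int p hbp).1, hmc, ← hjl]
        push_cast
        rfl
      · intro hne
        have hbp : ¬BRow D i p := by
          intro hbp
          exact hne (by rw [hme, hmc, hbp.2])
        rw [← hpr, ← hrk' p, lRow_compress hpS', lRow_congr (hrowNB p hbp),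
          hrk' p, lRow_compress hp]
    · intro e he
      by_cases he1 : 1 ≤ e
      · obtain ⟨p, hp, hpr⟩ := rank_surj (D := D) (c := e) he1 (by omega)
        have hpi : p < i := by
          by_contra hc
          push_neg at hc
          have := (rank_le_iff hiS hp).2 hc
          omega
        have hbp : ¬BRow D i p := fun hbp => by have := hbp.1; omega
        have hpS' : p ∈ SS D' := hSS'.symm ▸ hp
        rw [← hpr, ← hrk' p, lRow_compress hpS', lRow_congr (hrowNB p hbp),
          hrk' p, lRow_compress hp]
      · rw [comp_lRow_top (by omega), comp_lRow_top (by omega)]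

end St6
namespace St6

lemma skew_mem {lam mu : ℕ → ℕ} {k p q : ℕ} :
    (p, q) ∈ skewD lam mu k ↔ (1 ≤ p ∧ p ≤ k ∧ mu p + 1 ≤ q ∧ q ≤ lam p) := by
  simp only [skewD, Finset.mem_biUnion, Finset.mem_image, Finset.mem_Icc]
  constructor
  · rintro ⟨p', ⟨h1, h2⟩, q', ⟨h3, h4⟩, h5⟩
    rw [Prod.mk.injEq] at h5
    obtain ⟨h5a, h5b⟩ := h5
    subst h5a; subst h5b
    exact ⟨h1, h2, h3, h4⟩
  · rintro ⟨h1, h2, h3, h4⟩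
    exact ⟨p, ⟨h1, h2⟩, q, ⟨h3, h4⟩, rfl⟩

lemma part_anti {f : ℕ → ℕ} (hf : IsPartition f) :
    ∀ p q, 1 ≤ p → p ≤ q → f q ≤ f p := by
  intro p q h1 h2
  induction q with
  | zero => omega
  | succ n ih =>
    rcases Nat.lt_or_ge p (n + 1) with h | h
    · exact le_trans (hf.2 n (by omega)) (ih (by omega))
    · rw [show p = n + 1 by omega]

lemma skew_inv {lam mu : ℕ → ℕ} {k : ℕ}
    (hlam : IsPartition lam) (hmu : IsPartition mu) (hsub : ∀ p, mu p ≤ lam p)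
    (hne : (skewD lam mu k).Nonempty) : InvD (skewD lam mu k) := by
  set D0 := skewD lam mu k with hD0
  have hSmem : ∀ p, p ∈ SS D0 ↔ (1 ≤ p ∧ p ≤ k ∧ mu p + 1 ≤ lam p) := by
    intro p
    rw [mem_SS]
    constructor
    · rintro ⟨q, hq⟩
      have := skew_mem.1 (mem_row.1 hq)
      exact ⟨this.1, this.2.1, by omega⟩
    · rintro ⟨h1, h2, h3⟩
      exact ⟨lam p, mem_row.2 (skew_mem.2 ⟨h1, h2, h3, le_refl _⟩)⟩
  have hint : ∀ p, p ∈ SS D0 →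
      lRow D0 p = ((mu p + 1 : ℕ) : ℕ∞) ∧ rRow D0 p = lam p ∧ (row D0 p).Nonempty := by
    intro p hp
    obtain ⟨h1, h2, h3⟩ := (hSmem p).1 hp
    refine row_interval (fun q => ?_) h3
    rw [skew_mem]
    constructor
    · rintro ⟨-, -, a, b⟩; exact ⟨a, b⟩
    · rintro ⟨a, b⟩; exact ⟨h1, h2, a, b⟩
  have hcard1 : 1 ≤ (SS D0).card := by
    obtain ⟨⟨p, q⟩, hb⟩ := hne
    exact Finset.card_pos.2 ⟨p, mem_SS.2 ⟨q, mem_row.2 hb⟩⟩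
  have hantiC : ∀ e e', 1 ≤ e → e ≤ e' → e' ≤ (SS D0).card →
      lRow (compress D0) e' ≤ lRow (compress D0) e := by
    intro e e' h1 h2 h3
    obtain ⟨p, hp, hpr⟩ := rank_surj (D := D0) (c := e) h1 (by omega)
    obtain ⟨p', hp', hp'r⟩ := rank_surj (D := D0) (c := e') (by omega) h3
    have hpp' : p ≤ p' := (rank_le_iff hp hp').1 (by omega)
    rw [← hpr, ← hp'r, lRow_compress hp, lRow_compress hp', (hint p hp).1, (hint p' hp').1]
    have h1p : 1 ≤ p := ((hSmem p).1 hp).1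
    have : mu p' ≤ mu p := part_anti hmu p p' h1p hpp'
    exact_mod_cast by omega
  refine ⟨?_, hne, ?_, ?_, ?_⟩
  · rintro ⟨p, q⟩ hb
    have := skew_mem.1 hb
    exact ⟨this.1, by omega⟩
  · intro p j j' j'' hj hj' hle hle'
    have h1 := skew_mem.1 hj
    have h2 := skew_mem.1 hj'
    exact skew_mem.2 ⟨h1.1, h1.2.1, by omega, by omega⟩
  · intro p p' hp hp' hpp'
    rw [(hint p hp).2.1, (hint p' hp').2.1]
    exact part_anti hlam p p' ((hSmem p).1 hp).1 hpp'
  · refine ⟨(SS D0).card, (SS D0).card, hcard1, le_refl _, le_refl _, Or.inl ⟨?_, ?_, ?_⟩⟩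
    · intro p q h1 h2 h3
      rw [show p = q by omega]
    · intro h2
      exact hantiC ((SS D0).card - 1) ((SS D0).card) (by omega) (by omega) (le_refl _)
    · intro p q h1 h2 h3
      exact hantiC p q h1 h2 (by omega)

lemma preserve {D D' : Dg} (hInv : InvD D) (h : AlgStep D D') : InvD D' := by
  obtain ⟨i, hmv, hAB⟩ := h
  rcases hAB with ⟨hA, hIs⟩ | ⟨hB, hIs⟩
  · by_cases hE : i - 1 ∈ SS D
    · exact preserveA_main hInv hmv hA hIs hE
    · exact preserveA_empty hInv hmv hIs hE
  · exact preserveB hInv hmv hB hIs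

lemma chain_inv : ∀ (L : List Dg) (D0 : Dg), L.Chain' AlgStep → L.head? = some D0 →
    InvD D0 → ∀ D ∈ L, InvD D := by
  intro L
  induction L with
  | nil => intro D0 _ _ _ D hD; simp at hD
  | cons a L ih =>
    intro D0 hchain hhead hinv D hD
    have ha : a = D0 := by simpa using hhead
    subst ha
    rcases List.mem_cons.1 hD with h | h
    · subst h; exact hinv
    · cases L with
      | nil => simp at h
      | cons b L' =>
        have hstep : AlgStep a b := (List.isChain_cons_cons.1 hchain).1
        exact ih b ((List.isChain_cons_cons.1 hchain).2) rfl (preserve hinv hstep) D h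

end St6

theorem statement6 (lam mu : ℕ → ℕ) (k : ℕ)
    (hlam : IsPartition lam) (hmu : IsPartition mu) (hsub : ∀ p, mu p ≤ lam p)
    (hbd : ∀ p, k < p → lam p = 0)
    (hne : (skewD lam mu k).Nonempty)
    (L : List Dg) (D : Dg)
    (hhead : L.head? = some (skewD lam mu k)) (hchain : L.Chain' AlgStep) (hmem : D ∈ L) :
    AlmostSkew (compress D) (D.image Prod.fst).card := by
  have h0 : St6.InvD (skewD lam mu k) := St6.skew_inv hlam hmu hsub hne
  have hD : St6.InvD D := St6.chain_inv L (skewD lam mu k) hchain hhead h0 D hmem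
  exact St6.inv_almostSkew hD
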